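/- Let (γ_n)_{n≥0} be a sequence of real numbers, let T : ℝ[x] → ℝ[x] be the linear operator determined by T[H_n] = γ_n H_n for every n, let (Q_k)_{k≥0} be the differential coefficients of T, and set g_k*(−1) = Σ_{j=0}^{k} C(k,j) (−1)^{k−j} γ_j. Then for each m ∈ ℕ₀: Q_m(x) = Σ_{k=0}^{⌊m/2⌋} ((−1)^k/(k! 2^k)) ( Σ_{j=0}^{k} C(k,j) g_{m−k+j}*(−1)/2^{j} ) · x^{m−2k}/(m−2k)!. -/

import Mathlib

open Polynomial Finset

noncomputable section

/-- The physicists' Hermite polynomials. -/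
def hermitePoly (n : ℕ) : Polynomial ℝ :=
  ∑ k ∈ Finset.range (n / 2 + 1),
    Polynomial.C ((-1 : ℝ) ^ k * n.factorial * 2 ^ (n - 2 * k) /
      (k.factorial * (n - 2 * k).factorial)) * Polynomial.X ^ (n - 2 * k)

/-- The Laguerre polynomials. -/
def laguerrePoly (n : ℕ) : Polynomial ℝ :=
  ∑ k ∈ Finset.range (n + 1),
    Polynomial.C ((-1 : ℝ) ^ k / k.factorial * n.choose k) * Polynomial.X ^ k

/-- A real polynomial is hyperbolic if all of its complex roots are real
(the zero polynomial counts as hyperbolic). -/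
def Hyperbolic (p : Polynomial ℝ) : Prop :=
  p = 0 ∨ ∀ z : ℂ, Polynomial.aeval z p = 0 → z.im = 0

/-- A linear operator on ℝ[x] preserves hyperbolicity. -/
def HypPreserving (T : Polynomial ℝ →ₗ[ℝ] Polynomial ℝ) : Prop :=
  ∀ p : Polynomial ℝ, Hyperbolic p → Hyperbolic (T p)

/-- Classical multiplier sequence. -/
def ClassicalMS (γ : ℕ → ℝ) : Prop :=
  ∃ T : Polynomial ℝ →ₗ[ℝ] Polynomial ℝ,
    (∀ n, T (Polynomial.X ^ n) = γ n • Polynomial.X ^ n) ∧ HypPreserving T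

/-- Hermite multiplier sequence. -/
def HermiteMS (γ : ℕ → ℝ) : Prop :=
  ∃ T : Polynomial ℝ →ₗ[ℝ] Polynomial ℝ,
    (∀ n, T (hermitePoly n) = γ n • hermitePoly n) ∧ HypPreserving T

/-- Laguerre multiplier sequence. -/
def LaguerreMS (γ : ℕ → ℝ) : Prop :=
  ∃ T : Polynomial ℝ →ₗ[ℝ] Polynomial ℝ,
    (∀ n, T (laguerrePoly n) = γ n • laguerrePoly n) ∧ HypPreserving T

/-- A sequence is trivial if all entries vanish except possibly two at consecutive indices. -/
def TrivialSeq (γ : ℕ → ℝ) : Prop :=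
  ∃ m : ℕ, ∀ n, n ≠ m → n ≠ m + 1 → γ n = 0

namespace StmtAux

lemma alt_sum (n : ℕ) :
    ∑ s ∈ Finset.range (n + 1), (-1 : ℝ) ^ s * (n.choose s : ℝ)
      = if n = 0 then 1 else 0 := by
  have h := congrArg (fun z : ℤ => (z : ℝ)) (@Int.alternating_sum_range_choose n)
  push_cast at h
  split_ifs with h0 <;> simp [h0] at h ⊢ <;> exact h

lemma inversion (γ g : ℕ → ℝ)
    (hg : ∀ k, g k = ∑ j ∈ Finset.range (k + 1), (k.choose j : ℝ) * (-1) ^ (k - j) * γ j)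
    (m : ℕ) : ∑ s ∈ Finset.range (m + 1), (m.choose s : ℝ) * g s = γ m := by
  have step1 : ∀ s, (m.choose s : ℝ) * g s
      = ∑ j ∈ Finset.range (s+1), (m.choose s : ℝ) * ((s.choose j : ℝ) * (-1)^(s-j) * γ j) := by
    intro s; rw [hg s, Finset.mul_sum]
  rw [Finset.sum_congr rfl fun s _ => step1 s]
  rw [Finset.range_eq_Ico]
  have comm := Finset.sum_Ico_Ico_comm 0 (m+1)
    (fun j s => (m.choose s : ℝ) * ((s.choose j : ℝ) * (-1)^(s-j) * γ j))
  simp only [← Finset.range_eq_Ico] at comm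
  rw [← Finset.range_eq_Ico, ← comm]
  have inner : ∀ j ∈ Finset.range (m+1),
      ∑ s ∈ Finset.Ico j (m+1), (m.choose s : ℝ) * ((s.choose j : ℝ) * (-1)^(s-j) * γ j)
      = (if m - j = 0 then (1:ℝ) else 0) * ((m.choose j : ℝ) * γ j) := by
    intro j hj
    have hjm : j ≤ m := by simpa using Nat.lt_succ_iff.1 (Finset.mem_range.1 hj)
    rw [Finset.sum_Ico_eq_sum_range]
    have hmj : m + 1 - j = (m - j) + 1 := by omega
    rw [hmj]
    have hterm : ∀ u ∈ Finset.range ((m-j)+1),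
        (m.choose (j+u) : ℝ) * (((j+u).choose j : ℝ) * (-1)^(j+u-j) * γ j)
        = ((-1:ℝ)^u * ((m-j).choose u : ℝ)) * ((m.choose j : ℝ) * γ j) := by
      intro u hu
      have hu' : u ≤ m - j := by simpa using Nat.lt_succ_iff.1 (Finset.mem_range.1 hu)
      have hch := Nat.choose_mul (n := m) (show j ≤ j + u by omega)
      rw [Nat.add_sub_cancel_left] at hch
      have hchR : (m.choose (j+u) : ℝ) * ((j+u).choose j : ℝ)
          = (m.choose j : ℝ) * ((m-j).choose u : ℝ) := by exact_mod_cast congrArg (fun n : ℕ => (n : ℝ)) hch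
      rw [Nat.add_sub_cancel_left]
      linear_combination ((-1:ℝ)^u * γ j) * hchR
    rw [Finset.sum_congr rfl hterm, ← Finset.sum_mul, alt_sum (m-j)]
  rw [Finset.sum_congr rfl inner]
  rw [Finset.sum_eq_single m]
  · simp
  · intro j hj hjm
    have : ¬ (m - j = 0) := by
      have := Finset.mem_range.1 hj; omega
    simp [this]
  · intro h; exact absurd (Finset.mem_range.2 (by omega)) h

lemma hermite_natDegree (n : ℕ) : (hermitePoly n).natDegree = n := by
  refine le_antisymm ?_ (Polynomial.le_natDegree_of_ne_zero ?_)
  · apply Polynomial.natDegree_sum_le_of_forall_le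
    intro k hk
    exact (Polynomial.natDegree_C_mul_X_pow_le _ _).trans (Nat.sub_le _ _)
  · have : (hermitePoly n).coeff n = 2 ^ n := by
      rw [hermitePoly, Polynomial.finset_sum_coeff]
      rw [Finset.sum_eq_single 0]
      · simp [Nat.factorial]
        rw [mul_comm, mul_div_assoc, div_self (Nat.cast_ne_zero.2 n.factorial_ne_zero), mul_one]
      · intro k hk hk0
        simp only [Finset.mem_range] at hk
        rw [Polynomial.coeff_C_mul, Polynomial.coeff_X_pow, if_neg (by omega), mul_zero]
      · intro h; simp at h
    rw [this]; positivity

lemma hermite_deriv (n : ℕ) :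
    Polynomial.derivative (hermitePoly (n + 1)) = Polynomial.C ((2 : ℝ) * (n + 1)) * hermitePoly n := by
  rw [hermitePoly, hermitePoly, derivative_sum, Finset.mul_sum]
  rw [← Finset.sum_subset (Finset.range_subset_range.2 (by omega : n / 2 + 1 ≤ (n+1) / 2 + 1))
    (fun k hk hk' => ?_)]
  · refine Finset.sum_congr rfl fun k hk => ?_
    simp only [Finset.mem_range] at hk
    have h2k : 2 * k ≤ n := by omega
    rw [Polynomial.derivative_C_mul_X_pow]
    have he : n + 1 - 2 * k - 1 = n - 2 * k := by omega
    rw [he]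
    conv_rhs => rw [← mul_assoc, ← Polynomial.C_mul]
    congr 1
    have h1 : (n + 1 - 2 * k : ℕ) = (n - 2 * k) + 1 := by omega
    have h2 : ((n+1).factorial : ℝ) = (n+1) * n.factorial := by
      rw [Nat.factorial_succ]; push_cast; ring
    have h3 : ((n + 1 - 2*k).factorial : ℝ) = ((n - 2*k : ℕ) + 1) * (n - 2*k).factorial := by
      rw [h1, Nat.factorial_succ]; push_cast; ring
    have h4 : (2 : ℝ) ^ (n + 1 - 2 * k) = 2 * 2 ^ (n - 2 * k) := by
      rw [h1, pow_succ]; ring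
    have h5 : ((n + 1 - 2 * k : ℕ) : ℝ) = ((n - 2*k : ℕ) : ℝ) + 1 := by
      rw [h1]; push_cast; ring
    rw [h2, h3, h4, h5]
    set e := n - 2 * k with he2
    have f1 : (k.factorial : ℝ) ≠ 0 := Nat.cast_ne_zero.2 k.factorial_ne_zero
    have f2 : ((n - 2*k).factorial : ℝ) ≠ 0 := Nat.cast_ne_zero.2 (n - 2*k).factorial_ne_zero
    have f3 : ((n - 2*k : ℕ) : ℝ) + 1 ≠ 0 := by positivity
    field_simp
  · simp only [Finset.mem_range] at hk hk'
    have : n + 1 - 2 * k = 0 := by omega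
    rw [this]
    simp

lemma hermite_zero : hermitePoly 0 = 1 := by
  simp [hermitePoly]

lemma hermite_iterate (m : ℕ) : ∀ k, k ≤ m →
    Polynomial.derivative^[k] (hermitePoly m)
      = Polynomial.C ((2 : ℝ) ^ k * m.factorial / (m - k).factorial) * hermitePoly (m - k) := by
  intro k
  induction k with
  | zero =>
    intro _
    simp [div_self (Nat.cast_ne_zero.2 m.factorial_ne_zero : (m.factorial : ℝ) ≠ 0)]
  | succ k ih =>
    intro hk
    rw [Function.iterate_succ_apply', ih (by omega), Polynomial.derivative_C_mul]
    have h1 : m - k = (m - (k+1)) + 1 := by omega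
    rw [h1, hermite_deriv, ← mul_assoc, ← Polynomial.C_mul]
    congr 2
    have h2 : ((m - k).factorial : ℝ) = ((m - (k+1) : ℕ) + 1) * (m - (k+1)).factorial := by
      rw [h1, Nat.factorial_succ]; push_cast; ring
    rw [h1] at h2
    rw [h2, pow_succ]
    set e := m - (k+1) with he2
    have f2 : ((m - (k+1)).factorial : ℝ) ≠ 0 := Nat.cast_ne_zero.2 (Nat.factorial_ne_zero _)
    have f3 : ((m - (k+1) : ℕ) : ℝ) + 1 ≠ 0 := by positivity
    field_simp

lemma binom_pow (i : ℕ) : ((X:ℝ[X])^2 + 2*X)^i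
    = ∑ j ∈ Finset.range (i+1), C ((i.choose j : ℝ) * 2^i / 2^j) * X^(i+j) := by
  rw [add_pow]
  refine Finset.sum_congr rfl fun j hj => ?_
  have hji : j ≤ i := by simpa using Nat.lt_succ_iff.1 (Finset.mem_range.1 hj)
  have hc : ((i.choose j : ℝ) * 2^i / 2^j) = (i.choose j : ℝ) * 2^(i-j) := by
    rw [mul_div_assoc]; congr 1
    rw [div_eq_iff (by positivity : (2:ℝ)^j ≠ 0), ← pow_add]
    congr 1; omega
  have h2 : ((2:ℝ[X]))^(i-j) = C ((2:ℝ)^(i-j)) := by rw [C_pow]; rfl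
  have hn : ((i.choose j : ℕ) : ℝ[X]) = C ((i.choose j : ℝ)) := by
    simp [Polynomial.C_eq_natCast]
  have hx : (X:ℝ[X])^(i+j) = X^(2*j) * X^(i-j) := by
    rw [← pow_add]; congr 1; omega
  rw [hc, ← pow_mul, mul_pow, h2, hn, hx, C_mul]
  ring

lemma key (t N : ℕ) (g : ℕ → ℝ) :
    ∑ i ∈ Finset.range (t + 1), ∑ j ∈ Finset.range (i + 1), ∑ r ∈ Finset.range (N + 1),
      (t.choose i : ℝ) * (i.choose j : ℝ) * (N.choose r : ℝ) * 2 ^ i / 2 ^ j * g (i + j + r)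
    = ∑ s ∈ Finset.range (N + 2 * t + 1), ((N + 2 * t).choose s : ℝ) * g s := by
  set L := N + 2 * t with hL
  set Φ : Polynomial ℝ → ℝ := fun p => ∑ n ∈ Finset.range (L + 1), p.coeff n * g n with hΦ
  have Φsum : ∀ {ι : Type} (s : Finset ι) (f : ι → Polynomial ℝ),
      Φ (∑ x ∈ s, f x) = ∑ x ∈ s, Φ (f x) := by
    intro ι s f
    simp only [hΦ, Polynomial.finset_sum_coeff, Finset.sum_mul]
    exact Finset.sum_comm
  have Φmono : ∀ (a : ℝ) (d : ℕ), d ≤ L → Φ (Polynomial.C a * Polynomial.X ^ d) = a * g d := by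
    intro a d hd
    simp only [hΦ, Polynomial.coeff_C_mul, Polynomial.coeff_X_pow]
    rw [Finset.sum_eq_single d]
    · simp
    · intro b _ hb; simp [hb]
    · intro h; exact absurd (Finset.mem_range.2 (by omega)) h
  -- polynomial identity
  have hsq : ((X:ℝ[X]) + 1)^2 = (X^2 + 2*X) + 1 := by ring
  have h3 : (((X:ℝ[X]) + 1)^2)^t = ∑ i ∈ Finset.range (t+1), ∑ j ∈ Finset.range (i+1),
      C ((t.choose i : ℝ) * (i.choose j : ℝ) * 2^i / 2^j) * X^(i+j) := by
    rw [hsq, add_pow]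
    refine Finset.sum_congr rfl fun i hi => ?_
    rw [one_pow, mul_one, binom_pow, Finset.sum_mul]
    refine Finset.sum_congr rfl fun j hj => ?_
    have hn : ((t.choose i : ℕ) : ℝ[X]) = C ((t.choose i : ℝ)) := by
      simp [Polynomial.C_eq_natCast]
    rw [hn, mul_comm _ (C ((t.choose i : ℝ))), ← mul_assoc, ← C_mul]
    congr 2
    ring
  have h4 : ((X:ℝ[X]) + 1)^N = ∑ r ∈ Finset.range (N+1), C ((N.choose r : ℝ)) * X^r := by
    rw [add_pow]
    refine Finset.sum_congr rfl fun r hr => ?_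
    have hn : ((N.choose r : ℕ) : ℝ[X]) = C ((N.choose r : ℝ)) := by
      simp [Polynomial.C_eq_natCast]
    rw [one_pow, mul_one, hn, mul_comm]
  have h5 : ((X:ℝ[X]) + 1)^L = ∑ s ∈ Finset.range (L+1), C ((L.choose s : ℝ)) * X^s := by
    rw [add_pow]
    refine Finset.sum_congr rfl fun s hs => ?_
    have hn : ((L.choose s : ℕ) : ℝ[X]) = C ((L.choose s : ℝ)) := by
      simp [Polynomial.C_eq_natCast]
    rw [one_pow, mul_one, hn, mul_comm]
  have hpoly : (∑ i ∈ Finset.range (t+1), ∑ j ∈ Finset.range (i+1), ∑ r ∈ Finset.range (N+1),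
      C ((t.choose i : ℝ) * (i.choose j : ℝ) * (N.choose r : ℝ) * 2 ^ i / 2 ^ j) *
        X ^ (i + j + r))
      = ∑ s ∈ Finset.range (L + 1), C ((L.choose s : ℝ)) * X ^ s := by
    rw [← h5, show L = 2*t + N by omega, pow_add, pow_mul, h3, h4, Finset.sum_mul]
    refine Finset.sum_congr rfl fun i hi => ?_
    rw [Finset.sum_mul]
    refine Finset.sum_congr rfl fun j hj => ?_
    rw [Finset.mul_sum]
    refine Finset.sum_congr rfl fun r hr => ?_
    rw [mul_mul_mul_comm, ← C_mul, ← pow_add]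
    congr 1
    · congr 1; ring
  calc (∑ i ∈ Finset.range (t + 1), ∑ j ∈ Finset.range (i + 1), ∑ r ∈ Finset.range (N + 1),
      (t.choose i : ℝ) * (i.choose j : ℝ) * (N.choose r : ℝ) * 2 ^ i / 2 ^ j * g (i + j + r))
      = Φ (∑ i ∈ Finset.range (t+1), ∑ j ∈ Finset.range (i+1), ∑ r ∈ Finset.range (N+1),
          C ((t.choose i : ℝ) * (i.choose j : ℝ) * (N.choose r : ℝ) * 2 ^ i / 2 ^ j) *
            X ^ (i + j + r)) := by
        rw [Φsum]
        refine Finset.sum_congr rfl fun i hi => ?_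
        rw [Φsum]
        refine Finset.sum_congr rfl fun j hj => ?_
        rw [Φsum]
        refine Finset.sum_congr rfl fun r hr => ?_
        rw [Φmono]
        simp only [Finset.mem_range] at hi hj hr
        omega
    _ = Φ (∑ s ∈ Finset.range (L + 1), C ((L.choose s : ℝ)) * X ^ s) := by rw [hpoly]
    _ = ∑ s ∈ Finset.range (L + 1), ((L.choose s : ℝ)) * g s := by
        rw [Φsum]
        refine Finset.sum_congr rfl fun s hs => ?_
        rw [Φmono]
        simp only [Finset.mem_range] at hs
        omega

def hcoef (n l : ℕ) : ℝ :=
  (-1 : ℝ) ^ l * n.factorial * 2 ^ (n - 2 * l) / (l.factorial * (n - 2 * l).factorial)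

lemma hermitePoly_eq (n : ℕ) :
    hermitePoly n = ∑ l ∈ Finset.range (n / 2 + 1), C (hcoef n l) * X ^ (n - 2 * l) := rfl

def coefA (g : ℕ → ℝ) (m i : ℕ) : ℝ :=
  ((-1 : ℝ) ^ i / (i.factorial * 2 ^ i)) *
    (∑ j ∈ Finset.range (i + 1), (i.choose j : ℝ) * g (m - i + j) / 2 ^ j) /
    (m - 2 * i).factorial

def RR (g : ℕ → ℝ) (m : ℕ) : Polynomial ℝ :=
  ∑ i ∈ Finset.range (m / 2 + 1), Polynomial.C (coefA g m i) * Polynomial.X ^ (m - 2 * i)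

-- the scalar identity, per t
lemma scalar_id (γ g : ℕ → ℝ)
    (hγ : ∀ n, γ n = ∑ s ∈ Finset.range (n + 1), (n.choose s : ℝ) * g s)
    (m t : ℕ) (ht : 2 * t ≤ m) :
    ∑ i ∈ Finset.range (t + 1), ∑ r ∈ Finset.range (m - 2 * t + 1),
      coefA g (r + 2 * i) i * ((2:ℝ) ^ (r + 2*i) * m.factorial / (m - (r + 2*i)).factorial) *
        hcoef (m - (r + 2*i)) (t - i)
      = γ m * hcoef m t := by
  have step : ∀ i ∈ Finset.range (t+1), ∀ r ∈ Finset.range (m - 2*t + 1),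
      coefA g (r + 2 * i) i * ((2:ℝ) ^ (r + 2*i) * m.factorial / (m - (r + 2*i)).factorial) *
        hcoef (m - (r + 2*i)) (t - i)
      = ∑ j ∈ Finset.range (i + 1),
          hcoef m t * ((t.choose i : ℝ) * (i.choose j : ℝ) * ((m - 2*t).choose r : ℝ)
            * 2 ^ i / 2 ^ j * g (i + j + r)) := by
    intro i hi r hr
    simp only [Finset.mem_range] at hi hr
    obtain ⟨u, hu⟩ : ∃ u, t = i + u := ⟨t - i, by omega⟩
    obtain ⟨v, hv⟩ : ∃ v, m - 2*t = r + v := ⟨m - 2*t - r, by omega⟩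
    obtain ⟨m', hm'⟩ : ∃ m', m = r + v + 2*i + 2*u := ⟨0, by omega⟩
    subst hu
    rw [coefA, hcoef, hcoef]
    simp only [show r + 2*i - i = r + i from by omega,
      show r + 2*i - 2*i = r from by omega,
      show m - (r + 2*i) = v + 2*u from by omega,
      show i + u - i = u from by omega,
      show v + 2*u - 2*u = v from by omega,
      show m - 2*(i+u) = r + v from by omega]
    rw [Finset.mul_sum, Finset.sum_div, Finset.sum_mul, Finset.sum_mul]
    refine Finset.sum_congr rfl fun j hj => ?_
    have hji : j ≤ i := by simpa using Nat.lt_succ_iff.1 (Finset.mem_range.1 hj)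
    rw [Nat.cast_choose ℝ (show i ≤ i + u by omega),
        Nat.cast_choose ℝ (show r ≤ r + v by omega)]
    simp only [show i + u - i = u from by omega, show r + v - r = v from by omega,
      show r + i + j = i + j + r from by omega]
    have f1 : (i.factorial : ℝ) ≠ 0 := Nat.cast_ne_zero.2 (Nat.factorial_ne_zero _)
    have f2 : (u.factorial : ℝ) ≠ 0 := Nat.cast_ne_zero.2 (Nat.factorial_ne_zero _)
    have f3 : (r.factorial : ℝ) ≠ 0 := Nat.cast_ne_zero.2 (Nat.factorial_ne_zero _)
    have f4 : (v.factorial : ℝ) ≠ 0 := Nat.cast_ne_zero.2 (Nat.factorial_ne_zero _)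
    have f5 : ((v + 2*u).factorial : ℝ) ≠ 0 := Nat.cast_ne_zero.2 (Nat.factorial_ne_zero _)
    have f6 : ((r + v).factorial : ℝ) ≠ 0 := Nat.cast_ne_zero.2 (Nat.factorial_ne_zero _)
    have f7 : ((i + u).factorial : ℝ) ≠ 0 := Nat.cast_ne_zero.2 (Nat.factorial_ne_zero _)
    have f8 : ((2:ℝ) ^ i) ≠ 0 := by positivity
    have f9 : ((2:ℝ) ^ j) ≠ 0 := by positivity
    have f10 : (m.factorial : ℝ) ≠ 0 := Nat.cast_ne_zero.2 (Nat.factorial_ne_zero _)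
    field_simp
    ring
  rw [Finset.sum_congr rfl (fun i hi => Finset.sum_congr rfl (fun r hr => step i hi r hr))]
  -- now: triple sum; swap r and j, pull out hcoef, apply key
  have swap : ∀ i ∈ Finset.range (t+1),
      ∑ r ∈ Finset.range (m - 2*t + 1), ∑ j ∈ Finset.range (i + 1),
        hcoef m t * ((t.choose i : ℝ) * (i.choose j : ℝ) * ((m - 2*t).choose r : ℝ)
          * 2 ^ i / 2 ^ j * g (i + j + r))
      = hcoef m t * ∑ j ∈ Finset.range (i + 1), ∑ r ∈ Finset.range (m - 2*t + 1),
          ((t.choose i : ℝ) * (i.choose j : ℝ) * ((m - 2*t).choose r : ℝ)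
            * 2 ^ i / 2 ^ j * g (i + j + r)) := by
    intro i _
    rw [Finset.sum_comm, Finset.mul_sum]
    exact Finset.sum_congr rfl fun j _ => by rw [Finset.mul_sum]
  rw [Finset.sum_congr rfl swap, ← Finset.mul_sum, key t (m - 2*t) g]
  rw [show m - 2*t + 2*t = m from by omega, ← hγ m, mul_comm]

lemma star (γ g : ℕ → ℝ)
    (hγ : ∀ n, γ n = ∑ s ∈ Finset.range (n + 1), (n.choose s : ℝ) * g s) (m : ℕ) :
    ∑ k ∈ Finset.range (m + 1), RR g k *
        (Polynomial.C ((2 : ℝ) ^ k * m.factorial / (m - k).factorial) * hermitePoly (m - k))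
      = γ m • hermitePoly m := by
  -- Step 1: expand LHS into a triple sum of monomials
  have expand : ∀ k ∈ Finset.range (m+1),
      RR g k * (Polynomial.C ((2 : ℝ) ^ k * m.factorial / (m - k).factorial) * hermitePoly (m - k))
      = ∑ i ∈ Finset.range (k/2 + 1), ∑ l ∈ Finset.range ((m-k)/2 + 1),
          C (coefA g k i * ((2:ℝ) ^ k * m.factorial / (m - k).factorial) * hcoef (m-k) l)
            * X ^ (k - 2*i + (m - k - 2*l)) := by
    intro k _
    rw [RR, hermitePoly_eq, Finset.sum_mul]
    refine Finset.sum_congr rfl fun i _ => ?_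
    rw [Finset.mul_sum, Finset.mul_sum]
    refine Finset.sum_congr rfl fun l _ => ?_
    calc (C (coefA g k i) * X ^ (k - 2*i)) *
          (C ((2:ℝ) ^ k * m.factorial / (m - k).factorial) * (C (hcoef (m-k) l) * X ^ (m - k - 2*l)))
        = (C (coefA g k i) * C ((2:ℝ) ^ k * m.factorial / (m - k).factorial) * C (hcoef (m-k) l))
            * (X ^ (k - 2*i) * X ^ (m - k - 2*l)) := by ring
      _ = _ := by rw [← C_mul, ← C_mul, ← pow_add]
  rw [Finset.sum_congr rfl expand]
  -- Step 2: reindex the triple sum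
  have reindex :
      ∑ k ∈ Finset.range (m + 1), ∑ i ∈ Finset.range (k/2 + 1), ∑ l ∈ Finset.range ((m-k)/2 + 1),
          C (coefA g k i * ((2:ℝ) ^ k * m.factorial / (m - k).factorial) * hcoef (m-k) l)
            * X ^ (k - 2*i + (m - k - 2*l))
      = ∑ t ∈ Finset.range (m/2 + 1), ∑ i ∈ Finset.range (t + 1), ∑ r ∈ Finset.range (m - 2*t + 1),
          C (coefA g (r + 2*i) i * ((2:ℝ) ^ (r + 2*i) * m.factorial / (m - (r + 2*i)).factorial)
              * hcoef (m - (r + 2*i)) (t - i))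
            * X ^ (m - 2*t) := by
    refine ((Finset.sum_congr rfl fun k _ => Finset.sum_sigma' _ _ _).trans
      (Finset.sum_sigma' _ _ _)).trans (Eq.trans ?_
        (((Finset.sum_congr rfl fun t _ => Finset.sum_sigma' _ _ _).trans
          (Finset.sum_sigma' _ _ _)).symm))
    refine Finset.sum_nbij' (fun x => ⟨x.2.1 + x.2.2, x.2.1, x.1 - 2*x.2.1⟩)
      (fun y => ⟨y.2.2 + 2*y.2.1, y.2.1, y.1 - y.2.1⟩) ?_ ?_ ?_ ?_ ?_
    · rintro ⟨k, i, l⟩ hx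
      simp only [Finset.mem_sigma, Finset.mem_range] at hx ⊢
      omega
    · rintro ⟨t, i, r⟩ hy
      simp only [Finset.mem_sigma, Finset.mem_range] at hy ⊢
      omega
    · rintro ⟨k, i, l⟩ hx
      simp only [Finset.mem_sigma, Finset.mem_range] at hx
      obtain ⟨hk, hi, hl⟩ := hx
      simp only [show k - 2*i + 2*i = k from by omega, show i + l - i = l from by omega]
    · rintro ⟨t, i, r⟩ hy
      simp only [Finset.mem_sigma, Finset.mem_range] at hy
      obtain ⟨ht, hi, hr⟩ := hy
      simp only [show r + 2*i - 2*i = r from by omega, show i + (t - i) = t from by omega]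
    · rintro ⟨k, i, l⟩ hx
      simp only [Finset.mem_sigma, Finset.mem_range] at hx
      obtain ⟨hk, hi, hl⟩ := hx
      simp only [show k - 2*i + 2*i = k from by omega, show i + l - i = l from by omega,
        show m - 2*(i+l) = k - 2*i + (m - k - 2*l) from by omega]
  rw [reindex]
  -- Step 3: per-t, collect the sum of constants and use scalar_id
  rw [hermitePoly_eq, Finset.smul_sum]
  refine Finset.sum_congr rfl fun t ht => ?_
  have ht' : 2 * t ≤ m := by
    have := Finset.mem_range.1 ht; omega
  have collect : ∀ i ∈ Finset.range (t+1),
      ∑ r ∈ Finset.range (m - 2*t + 1),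
        C (coefA g (r + 2*i) i * ((2:ℝ) ^ (r + 2*i) * m.factorial / (m - (r + 2*i)).factorial)
            * hcoef (m - (r + 2*i)) (t - i)) * X ^ (m - 2*t)
      = C (∑ r ∈ Finset.range (m - 2*t + 1),
          coefA g (r + 2*i) i * ((2:ℝ) ^ (r + 2*i) * m.factorial / (m - (r + 2*i)).factorial)
            * hcoef (m - (r + 2*i)) (t - i)) * X ^ (m - 2*t) := by
    intro i _
    rw [map_sum, Finset.sum_mul]
  rw [Finset.sum_congr rfl collect, ← Finset.sum_mul, ← map_sum,
    scalar_id γ g hγ m t ht', Polynomial.smul_eq_C_mul, C_mul, mul_assoc]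

end StmtAux

/-- the explicit formula for the differential coefficients of a Hermite
diagonal differential operator. -/
theorem stmt_8 (γ : ℕ → ℝ)
    (T : Polynomial ℝ →ₗ[ℝ] Polynomial ℝ)
    (hT : ∀ n, T (hermitePoly n) = γ n • hermitePoly n)
    (Q : ℕ → Polynomial ℝ)
    (hQ : ∀ p : Polynomial ℝ,
      T p = ∑ k ∈ Finset.range (p.natDegree + 1), Q k * (Polynomial.derivative^[k] p))
    (g : ℕ → ℝ)
    (hg : ∀ k, g k = ∑ j ∈ Finset.range (k + 1), (k.choose j : ℝ) * (-1) ^ (k - j) * γ j) :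
    ∀ m : ℕ, Q m = ∑ k ∈ Finset.range (m / 2 + 1),
      Polynomial.C (((-1 : ℝ) ^ k / (k.factorial * 2 ^ k)) *
          (∑ j ∈ Finset.range (k + 1), (k.choose j : ℝ) * g (m - k + j) / 2 ^ j) /
          (m - 2 * k).factorial) *
        Polynomial.X ^ (m - 2 * k) := by
  have hγ : ∀ n, γ n = ∑ s ∈ Finset.range (n + 1), (n.choose s : ℝ) * g s :=
    fun n => (StmtAux.inversion γ g hg n).symm
  have main : ∀ n, γ n • hermitePoly n = ∑ k ∈ Finset.range (n + 1),
      Q k * (Polynomial.C ((2:ℝ) ^ k * n.factorial / (n - k).factorial) * hermitePoly (n - k)) := by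
    intro n
    have h0 := hQ (hermitePoly n)
    rw [hT n, StmtAux.hermite_natDegree] at h0
    rw [h0]
    refine Finset.sum_congr rfl fun k hk => ?_
    rw [StmtAux.hermite_iterate n k (by simpa using Nat.lt_succ_iff.1 (Finset.mem_range.1 hk))]
  suffices h : ∀ m, Q m = StmtAux.RR g m by
    intro m
    rw [h m, StmtAux.RR]
    simp only [StmtAux.coefA]
  intro m
  induction m using Nat.strong_induction_on with
  | _ m IH =>
  have e1 := main m
  rw [← StmtAux.star γ g hγ m] at e1
  rw [Finset.sum_range_succ, Finset.sum_range_succ] at e1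
  have esmall : ∑ k ∈ Finset.range m, StmtAux.RR g k *
        (Polynomial.C ((2:ℝ) ^ k * m.factorial / (m - k).factorial) * hermitePoly (m - k))
      = ∑ k ∈ Finset.range m, Q k *
        (Polynomial.C ((2:ℝ) ^ k * m.factorial / (m - k).factorial) * hermitePoly (m - k)) :=
    Finset.sum_congr rfl fun k hk => by rw [IH k (Finset.mem_range.1 hk)]
  rw [esmall] at e1
  have e3 := add_left_cancel e1
  have hEm : (Polynomial.C ((2:ℝ)^m * m.factorial / (m - m).factorial) * hermitePoly (m - m))
      = Polynomial.C ((2:ℝ)^m * m.factorial) := by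
    simp [Nat.sub_self, StmtAux.hermite_zero]
  rw [hEm] at e3
  have hc : ((2:ℝ)^m * m.factorial) ≠ 0 :=
    mul_ne_zero (pow_ne_zero _ two_ne_zero) (Nat.cast_ne_zero.2 m.factorial_ne_zero)
  exact (mul_right_cancel₀ (Polynomial.C_ne_zero.2 hc) e3).symm
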